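/- (Duhamel stability of local decay) Let U⁰(t,s) be a propagator on L²(ℝⁿ) satisfying the weighted decay ‖⟨x⟩^{-σ}U⁰(t,s)⟨x⟩^{-σ}‖_{L²→L²} ≤ C_{σ,2}⟨t−s⟩^{-α} with α > 1, and let W_ε(x,t) satisfy sup_t ‖⟨x⟩^{2σ}W_ε(·,t)‖_{L^∞} ≤ C₀ε. Let U(t) solve i∂_tψ = (H₀(t)+W_ε)ψ, i.e. the Duhamel equation ψ(t) = U⁰(t,0)ψ₀ − i∫₀^t U⁰(t,s)W_ε(·,s)ψ(s)ds. If ‖⟨x⟩^{-σ}U⁰(t,0)ψ₀‖ ≤ C_{σ,2}⟨t⟩^{-α}, then for ε small enough (depending only on C₀, C_{σ,2}, α) one has ‖⟨x⟩^{-σ}U(t)ψ₀‖_{L²} ≤ C⟨t⟩^{-α} for all t ≥ 0. -/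

import Mathlib

open ContinuousLinearMap intervalIntegral

private lemma w_cont (α : ℝ) : Continuous fun u : ℝ => (1 + u ^ 2) ^ (-(α / 2)) :=
  (continuous_const.add (continuous_pow 2)).rpow_const fun x => Or.inl (by show (1 + x ^ 2 : ℝ) ≠ 0; positivity)

private lemma w_le_one {α : ℝ} (hα : 1 < α) (u : ℝ) : (1 + u ^ 2) ^ (-(α / 2)) ≤ 1 :=
  Real.rpow_le_one_of_one_le_of_nonpos (by nlinarith [sq_nonneg u]) (by linarith)

private lemma kappa_bound {α : ℝ} (hα : 1 < α) (T : ℝ) (hT : 0 ≤ T) :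
    ∫ s in (0:ℝ)..T, (1 + s ^ 2) ^ (-(α / 2)) ≤ 1 + 1 / (α - 1) := by
  have hwc := w_cont α
  have hint : ∀ a b : ℝ, IntervalIntegrable (fun s : ℝ => (1 + s ^ 2) ^ (-(α / 2))) MeasureTheory.volume a b :=
    fun a b => hwc.intervalIntegrable a b
  have hpos : (0:ℝ) < 1 / (α - 1) := one_div_pos.mpr (by linarith)
  rcases le_or_gt T 1 with hT1 | hT1
  · calc ∫ s in (0:ℝ)..T, (1 + s ^ 2) ^ (-(α / 2))
        ≤ ∫ _ in (0:ℝ)..T, (1:ℝ) :=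
          integral_mono_on hT (hint 0 T) intervalIntegrable_const
            (fun x _ => w_le_one hα x)
      _ = T := by simp
      _ ≤ 1 + 1 / (α - 1) := by linarith
  · have hsplit := integral_add_adjacent_intervals (hint 0 1) (hint 1 T)
    rw [← hsplit]
    have h1 : ∫ s in (0:ℝ)..1, (1 + s ^ 2) ^ (-(α / 2)) ≤ 1 := by
      calc ∫ s in (0:ℝ)..1, (1 + s ^ 2) ^ (-(α / 2))
          ≤ ∫ _ in (0:ℝ)..1, (1:ℝ) :=
            integral_mono_on zero_le_one (hint 0 1) intervalIntegrable_const
              (fun x _ => w_le_one hα x)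
        _ = 1 := by simp
    have hintr : IntervalIntegrable (fun s : ℝ => s ^ (-α)) MeasureTheory.volume 1 T := by
      apply ContinuousOn.intervalIntegrable
      apply ContinuousOn.rpow_const continuousOn_id
      intro x hx
      rw [Set.uIcc_of_le hT1.le] at hx
      have hx0 : (0:ℝ) < x := lt_of_lt_of_le one_pos hx.1
      exact Or.inl (by simpa [id_eq] using hx0.ne')
    have h2 : ∫ s in (1:ℝ)..T, (1 + s ^ 2) ^ (-(α / 2)) ≤ 1 / (α - 1) := by
      have hmono : ∫ s in (1:ℝ)..T, (1 + s ^ 2) ^ (-(α / 2)) ≤ ∫ s in (1:ℝ)..T, s ^ (-α) := by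
        apply integral_mono_on hT1.le (hint 1 T) hintr
        intro x hx
        have hx1 : (1:ℝ) ≤ x := hx.1
        have hxpos : (0:ℝ) < x := by linarith
        have step1 : (1 + x ^ 2) ^ (-(α / 2)) ≤ (x ^ 2) ^ (-(α / 2)) :=
          Real.rpow_le_rpow_of_nonpos (by positivity) (by linarith) (by linarith)
        have step2 : (x ^ 2 : ℝ) ^ (-(α / 2)) = x ^ (-α) := by
          rw [← Real.rpow_natCast x 2, ← Real.rpow_mul hxpos.le]
          congr 1; push_cast; ring
        rw [← step2]; exact step1
      have hval : ∫ s in (1:ℝ)..T, s ^ (-α) = (T ^ (-α + 1) - 1 ^ (-α + 1)) / (-α + 1) := by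
        apply integral_rpow
        right
        constructor
        · intro h; have := neg_inj.mp h; linarith
        · rw [Set.uIcc_of_le hT1.le]; intro h; exact absurd h.1 (by norm_num)
      have hTpow : (0:ℝ) ≤ T ^ (-α + 1) := Real.rpow_nonneg hT _
      calc ∫ s in (1:ℝ)..T, (1 + s ^ 2) ^ (-(α / 2)) ≤ (T ^ (-α + 1) - 1 ^ (-α + 1)) / (-α + 1) :=
            hmono.trans hval.le
        _ = (1 - T ^ (-α + 1)) / (α - 1) := by
            rw [Real.one_rpow, div_eq_div_iff (by linarith) (by linarith)]; ring
        _ ≤ 1 / (α - 1) := by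
            rw [div_le_div_iff₀ (by linarith) (by linarith)]; nlinarith
    linarith

private lemma half_bound {α : ℝ} (hα : 1 < α) {t u : ℝ} (ht : 0 ≤ t) (hu : t / 2 ≤ u) :
    (1 + u ^ 2) ^ (-(α / 2)) ≤ 2 ^ α * (1 + t ^ 2) ^ (-(α / 2)) := by
  have h42 : ((4:ℝ)) ^ (α / 2) = 2 ^ α := by
    rw [show (4:ℝ) = (2:ℝ) ^ (2:ℝ) by
          rw [show ((2:ℝ):ℝ) = ((2:ℕ):ℝ) by norm_num, Real.rpow_natCast]; norm_num,
        ← Real.rpow_mul (by norm_num)]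
    congr 1; ring
  have hth : 0 ≤ t / 2 := by linarith
  -- first: (1 + u^2)^(-(α/2)) ≤ (1 + (t/2)^2)^(-(α/2))
  have s1 : (1 + u ^ 2) ^ (-(α / 2)) ≤ (1 + (t / 2) ^ 2) ^ (-(α / 2)) := by
    apply Real.rpow_le_rpow_of_nonpos (by positivity) ?_ (by linarith)
    nlinarith
  -- second: (1 + (t/2)^2)^(-(α/2)) ≤ 2^α * (1 + t^2)^(-(α/2))
  have key : (1 + t ^ 2) ^ (α / 2) ≤ 2 ^ α * (1 + (t / 2) ^ 2) ^ (α / 2) := by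
    rw [← h42, ← Real.mul_rpow (by norm_num) (by positivity)]
    apply Real.rpow_le_rpow (by positivity) (by nlinarith) (by linarith)
  have hp1 : (0:ℝ) < (1 + t ^ 2) ^ (α / 2) := Real.rpow_pos_of_pos (by positivity) _
  have hp2 : (0:ℝ) < (1 + (t / 2) ^ 2) ^ (α / 2) := Real.rpow_pos_of_pos (by positivity) _
  have s2 : (1 + (t / 2) ^ 2) ^ (-(α / 2)) ≤ 2 ^ α * (1 + t ^ 2) ^ (-(α / 2)) := by
    rw [Real.rpow_neg (by positivity), Real.rpow_neg (by positivity),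
      inv_eq_one_div, inv_eq_one_div, mul_one_div, div_le_div_iff₀ hp2 hp1, one_mul]
    linarith [key]
  exact s1.trans s2

private lemma conv_bound {α : ℝ} (hα : 1 < α) :
    ∃ Ct > (0:ℝ), ∀ t : ℝ, 0 ≤ t →
      (∫ s in (0:ℝ)..t, (1 + (t - s) ^ 2) ^ (-(α / 2)) * (1 + s ^ 2) ^ (-(α / 2)))
        ≤ Ct * (1 + t ^ 2) ^ (-(α / 2)) := by
  set κ : ℝ := 1 + 1 / (α - 1) with hκ
  have hκpos : 0 < κ := by rw [hκ]; have : (0:ℝ) < 1 / (α - 1) := one_div_pos.mpr (by linarith); linarith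
  refine ⟨2 * 2 ^ α * κ, mul_pos (mul_pos two_pos (Real.rpow_pos_of_pos two_pos α)) hκpos, ?_⟩
  intro t ht
  set w : ℝ → ℝ := fun u => (1 + u ^ 2) ^ (-(α / 2)) with hwdef
  show (∫ s in (0:ℝ)..t, w (t - s) * w s) ≤ 2 * 2 ^ α * κ * w t
  have hwc : Continuous w := w_cont α
  have hwpos : ∀ u, 0 < w u := fun u => Real.rpow_pos_of_pos (by positivity) _
  have hcont1 : Continuous fun s => w (t - s) * w s :=
    ((hwc.comp (continuous_const.sub continuous_id)).mul hwc)
  have hint : ∀ a b : ℝ, IntervalIntegrable (fun s => w (t - s) * w s) MeasureTheory.volume a b :=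
    fun a b => hcont1.intervalIntegrable a b
  have hintw : ∀ a b : ℝ, IntervalIntegrable w MeasureTheory.volume a b :=
    fun a b => hwc.intervalIntegrable a b
  have hsplit := integral_add_adjacent_intervals (hint 0 (t/2)) (hint (t/2) t)
  rw [← hsplit]
  -- bound on the first half
  have piece : ∀ (g : ℝ → ℝ), Continuous g → (∀ s ∈ Set.Icc (0:ℝ) (t/2), g s ≤ 2 ^ α * w t * w s) →
      ∫ s in (0:ℝ)..t/2, g s ≤ 2 ^ α * w t * κ := by
    intro g hg hgle
    calc ∫ s in (0:ℝ)..t/2, g s ≤ ∫ s in (0:ℝ)..t/2, 2 ^ α * w t * w s := by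
          apply integral_mono_on (by linarith) (hg.intervalIntegrable 0 (t/2))
            ((continuous_const.mul hwc).intervalIntegrable 0 (t/2)) hgle
      _ = 2 ^ α * w t * ∫ s in (0:ℝ)..t/2, w s := by rw [integral_const_mul]
      _ ≤ 2 ^ α * w t * κ := by
          apply mul_le_mul_of_nonneg_left (kappa_bound hα (t/2) (by linarith))
          positivity
  have b1 : ∫ s in (0:ℝ)..t/2, w (t - s) * w s ≤ 2 ^ α * w t * κ := by
    apply piece _ hcont1
    intro s hs
    have : w (t - s) ≤ 2 ^ α * w t := half_bound hα ht (by cases hs with | intro h1 h2 => linarith)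
    calc w (t - s) * w s ≤ (2 ^ α * w t) * w s :=
          mul_le_mul_of_nonneg_right this (hwpos s).le
      _ = 2 ^ α * w t * w s := by ring
  have b2 : ∫ s in (t/2)..t, w (t - s) * w s ≤ 2 ^ α * w t * κ := by
    have hrw : (∫ s in (t/2)..t, w (t - s) * w s)
        = ∫ u in (0:ℝ)..t/2, w u * w (t - u) := by
      have := integral_comp_sub_left (a := t/2) (b := t) (fun u => w u * w (t - u)) t
      simp only [sub_sub_cancel] at this
      rw [this, sub_self, sub_half]
    rw [hrw]
    apply piece _ (hwc.mul (hwc.comp (continuous_const.sub continuous_id)))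
    intro s hs
    have : w (t - s) ≤ 2 ^ α * w t := half_bound hα ht (by cases hs with | intro h1 h2 => linarith)
    calc w s * w (t - s) ≤ w s * (2 ^ α * w t) :=
          mul_le_mul_of_nonneg_left this (hwpos s).le
      _ = 2 ^ α * w t * w s := by ring
  calc (∫ s in (0:ℝ)..t/2, w (t - s) * w s) + ∫ s in (t/2)..t, w (t - s) * w s
      ≤ 2 ^ α * w t * κ + 2 ^ α * w t * κ := add_le_add b1 b2
    _ = 2 * 2 ^ α * κ * w t := by ring

/-- **Duhamel stability of local decay.** Let `U⁰(t,s)` be a propagator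
with weighted decay `‖⟨x⟩^{-σ}U⁰(t,s)⟨x⟩^{-σ}‖ ≤ C_{σ,2}⟨t−s⟩^{-α}`, `α > 1` (`X` stands
for `⟨x⟩^{-σ}`), and let `W_ε(t) = X M(t) X` with `‖M(t)‖ ≤ C₀ ε` (i.e.
`‖⟨x⟩^{2σ}W_ε‖_∞ ≤ C₀ε`).  If `ψ` solves the Duhamel equation
`ψ(t) = U⁰(t,0)ψ₀ − i∫₀^t U⁰(t,s)W_ε(s)ψ(s)ds` and `‖X U⁰(t,0)ψ₀‖ ≤ C_{σ,2}⟨t⟩^{-α}`,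
then for `ε` small enough (depending only on `C₀, C_{σ,2}, α`) one has
`‖X ψ(t)‖ ≤ C⟨t⟩^{-α}` for all `t ≥ 0`. -/
theorem duhamel_local_decay_stability
    {E : Type*} [NormedAddCommGroup E] [InnerProductSpace ℂ E] [CompleteSpace E]
    (C₀ Cσ α : ℝ) (hC₀ : 0 < C₀) (hCσ : 0 < Cσ) (hα : 1 < α) :
    ∃ ε₀ > 0, ∀ ε : ℝ, 0 < ε → ε < ε₀ →
      ∀ (U0 : ℝ → ℝ → E →L[ℂ] E) (X : E →L[ℂ] E) (M W : ℝ → E →L[ℂ] E)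
        (ψ : ℝ → E) (ψ₀ : E),
        Continuous (fun p : ℝ × ℝ => U0 p.1 p.2) → Continuous M → Continuous ψ →
        (∀ s, W s = X ∘L M s ∘L X) →
        (∀ s, ‖M s‖ ≤ C₀ * ε) →
        (∀ t s : ℝ, 0 ≤ s → s ≤ t →
          ‖X ∘L U0 t s ∘L X‖ ≤ Cσ * (1 + (t - s) ^ 2) ^ (-(α / 2))) →
        (∀ t ≥ (0 : ℝ), ‖X (U0 t 0 ψ₀)‖ ≤ Cσ * (1 + t ^ 2) ^ (-(α / 2))) →
        (∀ t ≥ (0 : ℝ),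
          ψ t = U0 t 0 ψ₀ - Complex.I • ∫ s in (0 : ℝ)..t, U0 t s (W s (ψ s))) →
        ∃ C : ℝ, ∀ t ≥ (0 : ℝ), ‖X (ψ t)‖ ≤ C * (1 + t ^ 2) ^ (-(α / 2)) := by
  obtain ⟨Ct, hCt, hconv⟩ := conv_bound hα
  refine ⟨1 / (2 * Cσ * C₀ * Ct), by positivity, ?_⟩
  intro ε hε hεlt U0 X M W ψ ψ₀ hU0c hMc hψc hW hM hXU hXU0 hduh
  refine ⟨2 * Cσ, ?_⟩
  intro t₀ ht₀
  set w : ℝ → ℝ := fun u => (1 + u ^ 2) ^ (-(α / 2)) with hwdef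
  have hwc : Continuous w := w_cont α
  have hwpos : ∀ u, 0 < w u := fun u => Real.rpow_pos_of_pos (by positivity) _
  set f : ℝ → ℝ := fun s => (1 + s ^ 2) ^ (α / 2) * ‖X (ψ s)‖ with hfdef
  have hfc : Continuous f :=
    ((continuous_const.add (continuous_pow 2)).rpow_const fun x => Or.inl (by show (1 + x ^ 2 : ℝ) ≠ 0; positivity)).mul
      (X.continuous.comp hψc).norm
  have hfnn : ∀ s, 0 ≤ f s := fun s =>
    mul_nonneg (Real.rpow_nonneg (by positivity) _) (norm_nonneg _)
  have hcancel : ∀ s : ℝ, (1 + s ^ 2) ^ (α / 2) * w s = 1 := by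
    intro s
    show (1 + s ^ 2) ^ (α / 2) * (1 + s ^ 2) ^ (-(α / 2)) = 1
    rw [← Real.rpow_add (by positivity)]; simp
  obtain ⟨sm, hsmmem, hsmmax⟩ := isCompact_Icc.exists_isMaxOn (s := Set.Icc 0 t₀)
    ⟨0, Set.left_mem_Icc.mpr ht₀⟩ hfc.continuousOn
  set S : ℝ := f sm with hSdef
  have hS0 : 0 ≤ S := hfnn sm
  have hsmall : Cσ * C₀ * ε * Ct < 1 / 2 := by
    have h := (lt_div_iff₀ (show (0:ℝ) < 2 * Cσ * C₀ * Ct by positivity)).mp hεlt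
    nlinarith
  -- the key estimate
  have key : ∀ t, 0 ≤ t → t ≤ t₀ → f t ≤ Cσ + Cσ * C₀ * ε * Ct * S := by
    intro t ht htt₀
    have hVcont : Continuous fun s => W s (ψ s) := by
      have : (fun s => W s (ψ s)) = fun s => X ((M s) (X (ψ s))) := by
        funext s; rw [hW s]; rfl
      rw [this]
      exact X.continuous.comp (hMc.clm_apply (X.continuous.comp hψc))
    have hcont1 : Continuous fun s => U0 t s (W s (ψ s)) :=
      (hU0c.comp (continuous_const.prodMk continuous_id)).clm_apply hVcont
    have hInt : IntervalIntegrable (fun s => U0 t s (W s (ψ s))) MeasureTheory.volume 0 t :=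
      hcont1.intervalIntegrable 0 t
    have hXsplit : X (ψ t) = X (U0 t 0 ψ₀)
        - Complex.I • ∫ s in (0:ℝ)..t, X (U0 t s (W s (ψ s))) := by
      rw [hduh t ht, map_sub, map_smul, X.intervalIntegral_comp_comm hInt]
    have hnormXint : ‖X (ψ t)‖ ≤ ‖X (U0 t 0 ψ₀)‖
        + ‖∫ s in (0:ℝ)..t, X (U0 t s (W s (ψ s)))‖ := by
      rw [hXsplit]
      refine (norm_sub_le _ _).trans ?_
      rw [norm_smul, Complex.norm_I, one_mul]
    -- pointwise bound on the integrand norm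
    have hpt : ∀ s ∈ Set.Icc (0:ℝ) t, ‖X (U0 t s (W s (ψ s)))‖
        ≤ Cσ * C₀ * ε * S * (w (t - s) * w s) := by
      intro s hs
      have hsrw : X (U0 t s (W s (ψ s))) = (X ∘L U0 t s ∘L X) ((M s) (X (ψ s))) := by
        rw [hW s]; rfl
      have hXψs : ‖X (ψ s)‖ ≤ S * w s := by
        have h1 : f s ≤ S := hsmmax ⟨hs.1, hs.2.trans htt₀⟩
        have h2 : ‖X (ψ s)‖ = f s * w s := by
          have := hcancel s
          show ‖X (ψ s)‖ = (1 + s ^ 2) ^ (α / 2) * ‖X (ψ s)‖ * w s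
          calc ‖X (ψ s)‖ = 1 * ‖X (ψ s)‖ := (one_mul _).symm
            _ = ((1 + s ^ 2) ^ (α / 2) * w s) * ‖X (ψ s)‖ := by rw [this]
            _ = (1 + s ^ 2) ^ (α / 2) * ‖X (ψ s)‖ * w s := by ring
        rw [h2]
        exact mul_le_mul_of_nonneg_right h1 (hwpos s).le
      rw [hsrw]
      calc ‖(X ∘L U0 t s ∘L X) ((M s) (X (ψ s)))‖
          ≤ ‖X ∘L U0 t s ∘L X‖ * ‖(M s) (X (ψ s))‖ := ContinuousLinearMap.le_opNorm _ _
        _ ≤ (Cσ * w (t - s)) * (C₀ * ε * (S * w s)) := by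
            apply mul_le_mul (hXU t s hs.1 hs.2) ?_ (norm_nonneg _)
              (by positivity)
            calc ‖(M s) (X (ψ s))‖ ≤ ‖M s‖ * ‖X (ψ s)‖ := ContinuousLinearMap.le_opNorm _ _
              _ ≤ (C₀ * ε) * (S * w s) :=
                  mul_le_mul (hM s) hXψs (norm_nonneg _) (by positivity)
        _ = Cσ * C₀ * ε * S * (w (t - s) * w s) := by ring
    have hIntBound : ‖∫ s in (0:ℝ)..t, X (U0 t s (W s (ψ s)))‖
        ≤ Cσ * C₀ * ε * S * (Ct * w t) := by
      calc ‖∫ s in (0:ℝ)..t, X (U0 t s (W s (ψ s)))‖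
          ≤ ∫ s in (0:ℝ)..t, ‖X (U0 t s (W s (ψ s)))‖ :=
            intervalIntegral.norm_integral_le_integral_norm ht
        _ ≤ ∫ s in (0:ℝ)..t, Cσ * C₀ * ε * S * (w (t - s) * w s) := by
            apply intervalIntegral.integral_mono_on ht
              ((X.continuous.comp hcont1).norm.intervalIntegrable 0 t)
              ((continuous_const.mul
                ((hwc.comp (continuous_const.sub continuous_id)).mul hwc)).intervalIntegrable 0 t)
              hpt
        _ = Cσ * C₀ * ε * S * ∫ s in (0:ℝ)..t, w (t - s) * w s := by
            rw [intervalIntegral.integral_const_mul]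
        _ ≤ Cσ * C₀ * ε * S * (Ct * w t) := by
            apply mul_le_mul_of_nonneg_left ?_ (by positivity)
            exact hconv t ht
    have htotal : ‖X (ψ t)‖ ≤ (Cσ + Cσ * C₀ * ε * Ct * S) * w t := by
      calc ‖X (ψ t)‖ ≤ ‖X (U0 t 0 ψ₀)‖ + ‖∫ s in (0:ℝ)..t, X (U0 t s (W s (ψ s)))‖ := hnormXint
        _ ≤ Cσ * w t + Cσ * C₀ * ε * S * (Ct * w t) := add_le_add (hXU0 t ht) hIntBound
        _ = (Cσ + Cσ * C₀ * ε * Ct * S) * w t := by ring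
    show (1 + t ^ 2) ^ (α / 2) * ‖X (ψ t)‖ ≤ Cσ + Cσ * C₀ * ε * Ct * S
    calc (1 + t ^ 2) ^ (α / 2) * ‖X (ψ t)‖
        ≤ (1 + t ^ 2) ^ (α / 2) * ((Cσ + Cσ * C₀ * ε * Ct * S) * w t) :=
          mul_le_mul_of_nonneg_left htotal (Real.rpow_nonneg (by positivity) _)
      _ = ((1 + t ^ 2) ^ (α / 2) * w t) * (Cσ + Cσ * C₀ * ε * Ct * S) := by ring
      _ = Cσ + Cσ * C₀ * ε * Ct * S := by rw [hcancel t, one_mul]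
  -- close the bootstrap
  have hSle : S ≤ 2 * Cσ := by
    have h1 : S ≤ Cσ + Cσ * C₀ * ε * Ct * S := key sm hsmmem.1 hsmmem.2
    nlinarith
  have hft₀ : f t₀ ≤ 2 * Cσ :=
    (hsmmax (Set.right_mem_Icc.mpr ht₀)).trans hSle
  have h2 : ‖X (ψ t₀)‖ = f t₀ * w t₀ := by
    show ‖X (ψ t₀)‖ = (1 + t₀ ^ 2) ^ (α / 2) * ‖X (ψ t₀)‖ * w t₀
    calc ‖X (ψ t₀)‖ = 1 * ‖X (ψ t₀)‖ := (one_mul _).symm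
      _ = ((1 + t₀ ^ 2) ^ (α / 2) * w t₀) * ‖X (ψ t₀)‖ := by rw [hcancel t₀]
      _ = (1 + t₀ ^ 2) ^ (α / 2) * ‖X (ψ t₀)‖ * w t₀ := by ring
  show ‖X (ψ t₀)‖ ≤ 2 * Cσ * w t₀
  rw [h2]
  exact mul_le_mul_of_nonneg_right hft₀ (hwpos t₀).le
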